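/- Let X be an n×n symmetric positive semidefinite real matrix and let K = X Cᵀ (C X Cᵀ + R)⁻¹ be its Kalman gain. Then for every n×q real matrix K̂ one has (I − K C) X ≤ (I − K̂ C) X (I − K̂ C)ᵀ + K̂ R K̂ᵀ in the Loewner order; that is, the Kalman gain minimizes the updated error covariance (I − K̂ C) X (I − K̂ C)ᵀ + K̂ R K̂ᵀ over all gains K̂. -/

import Mathlib

open Matrix

/-- The Kalman gain minimizes the updated error covariance over all gains,
in the Loewner order. -/
theorem stmt_2 {n q : ℕ} (C : Matrix (Fin q) (Fin n) ℝ) (R : Matrix (Fin q) (Fin q) ℝ)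
    (hR : R.PosDef) (X : Matrix (Fin n) (Fin n) ℝ) (hX : X.PosSemidef)
    (K : Matrix (Fin n) (Fin q) ℝ) (hK : K = X * Cᵀ * (C * X * Cᵀ + R)⁻¹) :
    ∀ Khat : Matrix (Fin n) (Fin q) ℝ,
      ((1 - Khat * C) * X * (1 - Khat * C)ᵀ + Khat * R * Khatᵀ
        - (1 - K * C) * X).PosSemidef := by
  intro Khat
  obtain ⟨S, hSdef⟩ : ∃ S : Matrix (Fin q) (Fin q) ℝ, S = C * X * Cᵀ + R := ⟨_, rfl⟩
  rw [← hSdef] at hK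
  have hCXC : (C * X * Cᵀ).PosSemidef := by
    have := hX.mul_mul_conjTranspose_same C
    simpa using this
  have hS : S.PosDef := by rw [hSdef]; exact Matrix.PosDef.posSemidef_add hCXC hR
  have hXs : Xᵀ = X := by
    have h : X.IsSymm := by simpa using hX.isHermitian
    exact h
  have hSs : Sᵀ = S := by
    have h : S.IsSymm := by simpa using hS.isHermitian
    exact h
  have hdet : IsUnit S.det := (Matrix.isUnit_iff_isUnit_det S).mp hS.isUnit
  have hSinv : S⁻¹ * S = 1 := Matrix.nonsing_inv_mul S hdet
  have hSinvT : (S⁻¹)ᵀ = S⁻¹ := by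
    rw [Matrix.transpose_nonsing_inv, hSs]
  have hKS : K * S = X * Cᵀ := by
    rw [hK, Matrix.mul_assoc, hSinv, Matrix.mul_one]
  have hKT : Kᵀ = S⁻¹ * C * X := by
    rw [hK]
    simp [Matrix.transpose_mul, hSinvT, hXs, Matrix.mul_assoc]
  have hSKT : S * Kᵀ = C * X := by
    rw [hKT, ← Matrix.mul_assoc, ← Matrix.mul_assoc, Matrix.mul_nonsing_inv S hdet,
      Matrix.one_mul]
  have hsym : X * Cᵀ * Kᵀ = K * C * X := by
    rw [hKT, hK]
    simp [Matrix.mul_assoc]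
  have expand : (Khat - K) * S * (Khat - K)ᵀ
      = Khat * S * Khatᵀ - Khat * (S * Kᵀ) - K * S * Khatᵀ + K * S * Kᵀ := by
    simp only [Matrix.transpose_sub, Matrix.sub_mul, Matrix.mul_sub, Matrix.mul_assoc]
    abel
  have key : (1 - Khat * C) * X * (1 - Khat * C)ᵀ + Khat * R * Khatᵀ - (1 - K * C) * X
      = (Khat - K) * S * (Khat - K)ᵀ := by
    have h1 : K * S * Khatᵀ = X * Cᵀ * Khatᵀ := by rw [hKS]
    have h2 : K * S * Kᵀ = K * C * X := by rw [hKS, hsym]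
    rw [expand, hSKT, h1, h2, hSdef]
    simp only [Matrix.transpose_sub, Matrix.transpose_mul, Matrix.transpose_one, hXs,
      Matrix.sub_mul, Matrix.mul_sub, Matrix.add_mul, Matrix.mul_add,
      Matrix.one_mul, Matrix.mul_one, Matrix.mul_assoc]
    abel
  rw [key]
  have := hS.posSemidef.mul_mul_conjTranspose_same (Khat - K)
  simpa using this
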